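/- Let S be a lattice of rank 2 with basis e, σ and intersection form e² = 0, e·σ = 1, σ² = -2 (the Néron–Severi lattice of a generic elliptic K3 surface with section). Define the Mukai pairing on ℤ ⊕ (ℤe ⊕ ℤσ) ⊕ ℤ by ⟨(r₁,ℓ₁,c₁),(r₂,ℓ₂,c₂)⟩ = ℓ₁·ℓ₂ - r₁c₂ - r₂c₁. Then the map sending (n/m, k) with m ≥ 1, gcd(n,m) = 1, k ∈ ℤ, to the vector (m, nσ + (km + n - n^{φ(m)-1})e, (-n² + n(km + n - n^{φ(m)-1}) + 1)/m) is a well-defined bijection from ℚ × ℤ onto the set of vectors v = (r, ℓ, s) with r > 0 and ⟨v,v⟩ = -2 (where for n/m = 0/1 the term n^{φ(m)-1} is set to 0). -/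
import Mathlib


/-- The Mukai pairing on `ℤ ⊕ NS ⊕ ℤ` where `NS = ℤe ⊕ ℤσ` with
`e² = 0`, `e·σ = 1`, `σ² = -2`. A divisor class `ℓ = b·e + n·σ`
is recorded as the pair `(b, n)`. -/
def mukaiPairing (v w : ℤ × (ℤ × ℤ) × ℤ) : ℤ :=
  (v.2.1.1 * w.2.1.2 + w.2.1.1 * v.2.1.2 - 2 * v.2.1.2 * w.2.1.2)
    - v.1 * w.2.2 - w.1 * v.2.2

/-- The power `n^{φ(m)-1}`, with the convention that it is `0` when
`m = 1` and `n = 0`. -/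
def sphPow (n : ℤ) (m : ℕ) : ℤ :=
  if m = 1 ∧ n = 0 then 0 else n ^ (Nat.totient m - 1)

/-- The parametrization of spherical Mukai vectors on a generic elliptic K3
surface with a section: `(n/m, k)` (with `m = q.den ≥ 1`, `n = q.num`,
`gcd(n,m) = 1`) is sent to
`(m, n·σ + (km + n - n^{φ(m)-1})·e, (-n² + n(km + n - n^{φ(m)-1}) + 1)/m)`. -/
def sphericalParam (p : ℚ × ℤ) : ℤ × (ℤ × ℤ) × ℤ :=
  let m : ℤ := (p.1.den : ℤ)
  let n : ℤ := p.1.num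
  let b : ℤ := p.2 * m + n - sphPow n p.1.den
  (m, (b, n), (-n ^ 2 + n * b + 1) / m)

/-- the map `sphericalParam` is well defined (the last entry is an
exact division) and is a bijection from `ℚ × ℤ` onto the set of spherical Mukai
vectors, i.e. the vectors `v` with positive rank and `⟨v,v⟩ = -2`. -/
lemma zmod_unit {n : ℤ} {m : ℕ} (hc : n.natAbs.Coprime m) : IsUnit (n : ZMod m) := by
  have h := (ZMod.isUnit_iff_coprime n.natAbs m).mpr hc
  rcases Int.natAbs_eq n with h' | h'
  · rw [h', Int.cast_natCast]; exact h
  · rw [h', Int.cast_neg, Int.cast_natCast]; exact h.neg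

lemma sphPow_key {n : ℤ} {m : ℕ} (hm : 0 < m) (hc : n.natAbs.Coprime m) :
    (m : ℤ) ∣ n * sphPow n m - 1 := by
  rcases Nat.lt_or_ge m 2 with h1 | h2
  · have : m = 1 := by omega
    subst this; exact one_dvd _
  · have hne : ¬(m = 1 ∧ n = 0) := by omega
    rw [sphPow, if_neg hne]
    have ht : 1 ≤ m.totient := Nat.totient_pos.mpr hm
    have hpow : n * n ^ (m.totient - 1) = n ^ m.totient := by
      rw [← pow_succ']; congr 1; omega
    rw [hpow]
    have hu := zmod_unit (m := m) hc
    have h1 := congrArg (Units.val) (ZMod.pow_totient hu.unit)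
    rw [Units.val_pow_eq_pow_val, Units.val_one, IsUnit.unit_spec] at h1
    have : ((n ^ m.totient - 1 : ℤ) : ZMod m) = 0 := by push_cast [h1]; ring
    exact (ZMod.intCast_zmod_eq_zero_iff_dvd _ _).mp this
lemma sphericalParam_eq (q : ℚ) (k : ℤ) :
    sphericalParam (q, k) =
      ((q.den : ℤ),
        (k * (q.den : ℤ) + q.num - sphPow q.num q.den, q.num),
        (-q.num ^ 2 + q.num * (k * (q.den : ℤ) + q.num - sphPow q.num q.den) + 1) / (q.den : ℤ)) :=
  rfl

lemma sph_dvd (p : ℚ × ℤ) :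
    ((p.1.den : ℤ)) ∣
      (-p.1.num ^ 2 + p.1.num * (p.2 * (p.1.den : ℤ) + p.1.num - sphPow p.1.num p.1.den) + 1) := by
  have hkey := sphPow_key p.1.pos p.1.reduced
  have : (-p.1.num ^ 2 + p.1.num * (p.2 * (p.1.den : ℤ) + p.1.num - sphPow p.1.num p.1.den) + 1)
      = (p.1.den : ℤ) * (p.2 * p.1.num) - (p.1.num * sphPow p.1.num p.1.den - 1) := by ring
  rw [this]
  exact dvd_sub (Dvd.intro _ rfl) hkey

theorem sphericalParam_bijection :
    (∀ p : ℚ × ℤ,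
      ((p.1.den : ℤ)) ∣
        (-p.1.num ^ 2 + p.1.num * (p.2 * (p.1.den : ℤ) + p.1.num - sphPow p.1.num p.1.den) + 1)) ∧
    Set.BijOn sphericalParam Set.univ
      {v : ℤ × (ℤ × ℤ) × ℤ | 0 < v.1 ∧ mukaiPairing v v = -2} := by
  refine ⟨sph_dvd, ?_, ?_, ?_⟩
  · -- MapsTo
    rintro ⟨q, k⟩ -
    have hdvd := sph_dvd (q, k)
    have hm : (0:ℤ) < (q.den : ℤ) := by exact_mod_cast q.pos
    rw [Set.mem_setOf_eq, sphericalParam_eq]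
    set n := q.num
    set b := k * (q.den:ℤ) + n - sphPow n q.den with hb
    have hmul : (q.den:ℤ) * ((-n ^ 2 + n * b + 1) / (q.den:ℤ)) = -n ^ 2 + n * b + 1 :=
      Int.mul_ediv_cancel' hdvd
    refine ⟨hm, ?_⟩
    simp only [mukaiPairing]
    nlinarith [hmul]
  · -- InjOn
    rintro ⟨q, k⟩ - ⟨q', k'⟩ - h
    rw [sphericalParam_eq, sphericalParam_eq, Prod.mk.injEq, Prod.mk.injEq, Prod.mk.injEq] at h
    obtain ⟨hden, ⟨hb, hn⟩, -⟩ := h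
    have hd : q.den = q'.den := by exact_mod_cast hden
    have hq : q = q' := Rat.ext hn hd
    subst hq
    have hm : (0:ℤ) < (q.den : ℤ) := by exact_mod_cast q.pos
    have hk : k = k' := by
      have h1 : k * (q.den:ℤ) = k' * (q.den:ℤ) := by omega
      exact mul_right_cancel₀ (by omega) h1
    simp [hk]
  · -- SurjOn
    rintro ⟨r, ⟨b, n⟩, s⟩ ⟨hr, hp⟩
    simp only [mukaiPairing] at hp
    have hrs : r * s = n * b - n ^ 2 + 1 := by nlinarith [hp]
    have hcop : IsCoprime n r := ⟨n - b, s, by nlinarith [hrs]⟩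
    have hgcd : Int.gcd n r = 1 := Int.isCoprime_iff_gcd_eq_one.mp hcop
    have hrnat : (r.toNat : ℤ) = r := Int.toNat_of_nonneg hr.le
    have hcopn : n.natAbs.Coprime r.toNat := by
      have h2 : r.natAbs = r.toNat := by omega
      rw [← h2]; exact hgcd
    set q : ℚ := ⟨n, r.toNat, by omega, hcopn⟩ with hq
    have hqnum : q.num = n := rfl
    have hqden : q.den = r.toNat := rfl
    have hkey := sphPow_key (m := r.toNat) (by omega) hcopn
    rw [hrnat] at hkey
    set P := sphPow n r.toNat with hP
    have hdvd2 : r ∣ n * (b - n + P) := by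
      have h3 : n * (b - n + P) = (n * b - n ^ 2 + 1) + (n * P - 1) := by ring
      rw [h3, ← hrs]
      exact dvd_add (Dvd.intro _ rfl) hkey
    have hdvd3 : r ∣ (b - n + P) := (hcop.symm).dvd_of_dvd_mul_left hdvd2
    refine ⟨(q, (b - n + P) / r), Set.mem_univ _, ?_⟩
    rw [sphericalParam_eq, hqnum, hqden, hrnat, ← hP]
    have hb' : (b - n + P) / r * r + n - P = b := by
      rw [Int.ediv_mul_cancel hdvd3]; ring
    rw [hb']
    have hs : (-n ^ 2 + n * b + 1) / r = s := by
      have h4 : -n ^ 2 + n * b + 1 = r * s := by linarith [hrs]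
      rw [h4, Int.mul_ediv_cancel_left _ (by omega)]
    rw [hs]
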